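/- Let A be a unital C*-algebra, let t be a real number with 0 < t < 1, and let Y ∈ A satisfy Y*Y = t·(Y Y*) + (1 − t)·1. Then the spectrum of Y Y* is contained in the set {1 − t^k : k ∈ ℕ} ∪ {1}. -/

import Mathlib

/-- Let `A` be a unital C*-algebra, `0 < t < 1`, and `Y ∈ A` with
`Y* Y = t (Y Y*) + (1 − t) 1`. Then the spectrum of `Y Y*` is contained in
`{1 − t^k : k ∈ ℕ} ∪ {1}`. -/
theorem spectrum_of_qScaled_element
    {A : Type*} [NormedRing A] [StarRing A] [CStarRing A] [NormedAlgebra ℂ A]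
    [StarModule ℂ A] [CompleteSpace A]
    (t : ℝ) (ht0 : 0 < t) (ht1 : t < 1) (Y : A)
    (hY : star Y * Y = (t : ℂ) • (Y * star Y) + ((1 - t : ℝ) : ℂ) • 1) :
    spectrum ℂ (Y * star Y) ⊆
      {x : ℂ | (∃ k : ℕ, x = 1 - (t : ℂ) ^ k) ∨ x = 1} := by
  intro z hz
  set P := Y * star Y with hPdef
  have htc : (t : ℂ) ≠ 0 := by exact_mod_cast ht0.ne'
  -- key step: nonzero spectral values can be pulled back through the affine map
  have key : ∀ w : ℂ, w ∈ spectrum ℂ P → w ≠ 0 →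
      (w - (1 - (t : ℂ))) / (t : ℂ) ∈ spectrum ℂ P := by
    intro w hw hw0
    have h1 : w ∈ spectrum ℂ (star Y * Y) := by
      have hmem : w ∈ spectrum ℂ (Y * star Y) \ {0} := ⟨hw, by simpa using hw0⟩
      rw [spectrum.nonzero_mul_comm] at hmem
      exact hmem.1
    rw [hY] at h1
    set μ := (w - (1 - (t : ℂ))) / (t : ℂ) with hμ
    rw [spectrum.mem_iff] at h1 ⊢
    intro hu
    apply h1
    have hc : (t : ℂ) * μ = w - (1 - (t : ℂ)) := by
      rw [hμ]; field_simp
    have hrw : algebraMap ℂ A w - ((t : ℂ) • P + ((1 - t : ℝ) : ℂ) • 1)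
        = (t : ℂ) • (algebraMap ℂ A μ - P) := by
      simp only [Algebra.algebraMap_eq_smul_one]
      push_cast
      rw [smul_sub, smul_smul, hc]
      module
    rw [hrw]
    exact IsUnit.smul (Units.mk0 (t : ℂ) htc) hu
  -- bound on the spectrum
  have hbound : ∀ w : ℂ, w ∈ spectrum ℂ P → ‖w‖ ≤ ‖P‖ * ‖(1 : A)‖ := fun w hw =>
    spectrum.norm_le_norm_mul_of_mem hw
  by_contra hcon
  simp only [Set.mem_setOf_eq, not_or, not_exists] at hcon
  obtain ⟨h1, h2⟩ := hcon
  -- iterate the key step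
  have hall : ∀ n : ℕ, 1 - (1 - z) / (t : ℂ) ^ n ∈ spectrum ℂ P := by
    intro n
    induction n with
    | zero => simpa using hz
    | succ n ih =>
      have hne : 1 - (1 - z) / (t : ℂ) ^ n ≠ 0 := by
        intro h
        apply h1 n
        have hpow : ((t : ℂ)) ^ n ≠ 0 := pow_ne_zero _ htc
        have : (1 - z) = (t : ℂ) ^ n := by
          field_simp at h
          linear_combination -h
        linear_combination -this
      have hstep := key _ ih hne
      have heq : ((1 - (1 - z) / (t : ℂ) ^ n) - (1 - (t : ℂ))) / (t : ℂ)
          = 1 - (1 - z) / (t : ℂ) ^ (n + 1) := by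
        have hpow : ((t : ℂ)) ^ n ≠ 0 := pow_ne_zero _ htc
        field_simp
        ring
      rwa [heq] at hstep
  -- derive a contradiction from unboundedness
  have hz1 : (1 : ℂ) - z ≠ 0 := sub_ne_zero.mpr (Ne.symm h2)
  have hnorm : 0 < ‖(1 : ℂ) - z‖ := norm_pos_iff.mpr hz1
  have hRpos : (0 : ℝ) < ‖P‖ * ‖(1 : A)‖ + 2 := by positivity
  obtain ⟨n, hn⟩ := exists_pow_lt_of_lt_one
    (div_pos hnorm hRpos) ht1
  have hmem := hall n
  have hle := hbound _ hmem
  have hpow : (0 : ℝ) < t ^ n := pow_pos ht0 n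
  have hbig : ‖P‖ * ‖(1 : A)‖ + 2 < ‖(1 - z) / (t : ℂ) ^ n‖ := by
    rw [norm_div, norm_pow]
    have : ‖(t : ℂ)‖ = t := by
      simp [Complex.norm_real, abs_of_pos ht0]
    rw [this]
    rw [lt_div_iff₀ hpow]
    calc (‖P‖ * ‖(1 : A)‖ + 2) * t ^ n
        < (‖P‖ * ‖(1 : A)‖ + 2) * (‖(1 : ℂ) - z‖ / (‖P‖ * ‖(1 : A)‖ + 2)) := by
          exact mul_lt_mul_of_pos_left hn hRpos
      _ = ‖(1 : ℂ) - z‖ := by field_simp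
  have : ‖(1 - z) / (t : ℂ) ^ n‖ - ‖(1 : ℂ)‖ ≤ ‖(1 : ℂ) - (1 - z) / (t : ℂ) ^ n‖ := by
    have := norm_sub_norm_le ((1 - z) / (t : ℂ) ^ n) (1 : ℂ)
    calc ‖(1 - z) / (t : ℂ) ^ n‖ - ‖(1 : ℂ)‖
        ≤ ‖(1 - z) / (t : ℂ) ^ n - 1‖ := this
      _ = ‖(1 : ℂ) - (1 - z) / (t : ℂ) ^ n‖ := by rw [norm_sub_rev]
  simp only [norm_one] at this
  linarith
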